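/- On a weak almost para-C-manifold, [ξ_i, ξ_j] = 0 and ∇_{ξ_i} ξ_j = 0 for all i, j; hence ker f defines a totally geodesic foliation with sectional curvature K(ξ_i, ξ_j) = 0. -/
import Mathlib


open scoped BigOperators

noncomputable section

variable (C V : Type*) [CommRing C] [Algebra ℝ C] [AddCommGroup V]
  [Module ℝ V] [Module C V] [IsScalarTower ℝ C V]

/-- A metric weak para-f-structure on a manifold, modelled algebraically:
`C` plays the role of the ring of smooth functions, `V` the `C`-module of vector fields
with Lie bracket `b` and derivation action `act` of vector fields on functions,
`g` is a compatible pseudo-Riemannian metric (with `f` of rank `2n`, encoded by `hrank`)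
and `nabla` its Levi-Civita connection (torsion-free and metric). -/
structure MWPF (p : ℕ) where
  f : V →ₗ[C] V
  Q : V →ₗ[C] V
  ξ : Fin p → V
  η : Fin p → V →ₗ[C] C
  g : V →ₗ[C] V →ₗ[C] C
  b : V → V → V
  act : V → C → C
  nabla : V → V → V
  hQbij : Function.Bijective Q
  hf2 : ∀ X, f (f X) = Q X - ∑ i, η i X • ξ i
  hf3 : ∀ X, f (f (f X)) = f (Q X)
  hetaxi : ∀ i j, η i (ξ j) = if i = j then (1 : C) else 0
  hQxi : ∀ i, Q (ξ i) = ξ i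
  hrange : ∀ X : V, X ∈ LinearMap.range f ↔ ∀ i, η i X = 0
  hgsymm : ∀ X Y, g X Y = g Y X
  hgnondeg : ∀ X, (∀ Y, g X Y = 0) → X = 0
  hrank : ∀ Z, (∀ i, η i Z = 0) → (∀ Y, g Z (f Y) = 0) → Z = 0
  hgcompat : ∀ X Y, g (f X) (f Y) = -(g X (Q Y)) + ∑ i, η i X * η i Y
  hbskew : ∀ X Y, b X Y = - b Y X
  hbaddl : ∀ X Y Z, b (X + Y) Z = b X Z + b Y Z
  hjacobi : ∀ X Y Z, b X (b Y Z) + b Y (b Z X) + b Z (b X Y) = 0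
  hactadd : ∀ X a c, act X (a + c) = act X a + act X c
  hactmul : ∀ X a c, act X (a * c) = act X a * c + a * act X c
  hactX : ∀ (a : C) X Y c, act (a • X + Y) c = a * act X c + act Y c
  hbleib : ∀ X (a : C) Y, b X (a • Y) = act X a • Y + a • b X Y
  hnab1 : ∀ (a : C) X X' Y, nabla (a • X + X') Y = a • nabla X Y + nabla X' Y
  hnabadd : ∀ X Y Z, nabla X (Y + Z) = nabla X Y + nabla X Z
  hnableib : ∀ X (a : C) Y, nabla X (a • Y) = act X a • Y + a • nabla X Y
  htors : ∀ X Y, nabla X Y - nabla Y X = b X Y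
  hmetric : ∀ X Y Z, act X (g Y Z) = g (nabla X Y) Z + g Y (nabla X Z)

namespace MWPF

variable {C V} {p : ℕ} (s : MWPF C V p)

/-- The fundamental 2-form `Φ(X,Y) = g(X, fY)`. -/
def Phi (X Y : V) : C := s.g X (s.f Y)

/-- `dη^i(X,Y) = (1/2)(X(η^i Y) - Y(η^i X) - η^i [X,Y])`. -/
def dEta (i : Fin p) (X Y : V) : C :=
  (2⁻¹ : ℝ) • (s.act X (s.η i Y) - s.act Y (s.η i X) - s.η i (s.b X Y))

/-- The Nijenhuis torsion `[f,f]`. -/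
def Nij (X Y : V) : V :=
  s.f (s.f (s.b X Y)) + s.b (s.f X) (s.f Y) - s.f (s.b (s.f X) Y) - s.f (s.b X (s.f Y))

/-- `N^(1)(X,Y) = [f,f](X,Y) - 2 Σ_i dη^i(X,Y) ξ_i`. -/
def N1 (X Y : V) : V := s.Nij X Y - (2 : ℝ) • ∑ i, s.dEta i X Y • s.ξ i

/-- The difference tensor `Q̃ = Q - id`. -/
def Qt (X : V) : V := s.Q X - X

/-- The Lie derivative of `f`: `(£_Z f)X = [Z, fX] - f[Z,X]`. -/
def Lief (Z X : V) : V := s.b Z (s.f X) - s.f (s.b Z X)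

/-- The Lie derivative of `g`: `(£_Z g)(X,Y) = Z(g(X,Y)) - g([Z,X],Y) - g(X,[Z,Y])`. -/
def Lieg (Z X Y : V) : C := s.act Z (s.g X Y) - s.g (s.b Z X) Y - s.g X (s.b Z Y)

/-- `N^(2)_i(X,Y) = (£_{fX} η^i)Y - (£_{fY} η^i)X`. -/
def N2 (i : Fin p) (X Y : V) : C :=
  (s.act (s.f X) (s.η i Y) - s.η i (s.b (s.f X) Y))
    - (s.act (s.f Y) (s.η i X) - s.η i (s.b (s.f Y) X))

/-- The exterior differential of the fundamental 2-form. -/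
def dPhi (X Y Z : V) : C := (3⁻¹ : ℝ) •
  (s.act X (s.Phi Y Z) + s.act Y (s.Phi Z X) + s.act Z (s.Phi X Y)
    - s.Phi (s.b X Y) Z - s.Phi (s.b Z X) Y - s.Phi (s.b Y Z) X)

/-- The tensor `h_i = (1/2) £_{ξ_i} f`. -/
def hmap (i : Fin p) (X : V) : V := (2⁻¹ : ℝ) • s.Lief (s.ξ i) X

/-- The tensor `N^(5)`. -/
def N5 (X Y Z : V) : C :=
  s.act (s.f Z) (s.g X (s.Qt Y)) - s.act (s.f Y) (s.g X (s.Qt Z))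
    + s.g (s.b X (s.f Z)) (s.Qt Y) - s.g (s.b X (s.f Y)) (s.Qt Z)
    + s.g (s.b Y (s.f Z) - s.b Z (s.f Y) - s.f (s.b Y Z)) (s.Qt X)

/-- The curvature tensor of `nabla`. -/
def Rm (X Y Z : V) : V :=
  s.nabla X (s.nabla Y Z) - s.nabla Y (s.nabla X Z) - s.nabla (s.b X Y) Z

end MWPF


section Aux

variable {C V : Type*} [CommRing C] [Algebra ℝ C] [AddCommGroup V]
  [Module ℝ V] [Module C V] [IsScalarTower ℝ C V] {p : ℕ} (s : MWPF C V p)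

lemma aux_act_zero (X : V) : s.act X 0 = 0 := by
  have h := s.hactadd X 0 0
  rw [add_zero] at h
  exact (add_eq_left.mp h.symm)

lemma aux_act_one (X : V) : s.act X 1 = 0 := by
  have h := s.hactmul X 1 1
  simp only [mul_one, one_mul] at h
  exact (add_eq_left.mp h.symm)

lemma aux_act_const (X : V) (i j : Fin p) : s.act X (s.η i (s.ξ j)) = 0 := by
  rw [s.hetaxi]
  split_ifs
  · exact aux_act_one s X
  · exact aux_act_zero s X

lemma aux_nabla_zero_right (X : V) : s.nabla X 0 = 0 := by
  have h := s.hnabadd X 0 0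
  rw [add_zero] at h
  exact (add_eq_left.mp h.symm)

lemma aux_nabla_zero_left (Y : V) : s.nabla 0 Y = 0 := by
  have h := s.hnab1 (1 : C) 0 0 Y
  simp only [one_smul, add_zero] at h
  exact (add_eq_left.mp h.symm)

lemma aux_fxi (j : Fin p) : s.f (s.ξ j) = 0 := by
  have hff : s.f (s.f (s.ξ j)) = 0 := by
    rw [s.hf2, s.hQxi]
    simp [s.hetaxi, ite_smul]
  have h3 := s.hf3 (s.ξ j)
  rw [s.hQxi, hff, map_zero] at h3
  exact h3.symm

lemma aux_gxi (j : Fin p) (X : V) : s.g X (s.ξ j) = s.η j X := by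
  have h := s.hgcompat X (s.ξ j)
  rw [aux_fxi s j, map_zero, s.hQxi] at h
  simp only [s.hetaxi, mul_ite, mul_one, mul_zero, Finset.sum_ite_eq',
    Finset.mem_univ, if_true] at h
  linear_combination h

lemma aux_gxi' (j : Fin p) (X : V) : s.g (s.ξ j) X = s.η j X := by
  rw [s.hgsymm]; exact aux_gxi s j X

lemma aux_etaf (k : Fin p) (X : V) : s.η k (s.f X) = 0 :=
  (s.hrange (s.f X)).mp ⟨X, rfl⟩ k

lemma aux_deta (hEta : ∀ (i : Fin p) (X Y : V), s.dEta i X Y = 0)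
    (i : Fin p) (X Y : V) :
    s.act X (s.η i Y) - s.act Y (s.η i X) - s.η i (s.b X Y) = 0 := by
  have h := hEta i X Y
  unfold MWPF.dEta at h
  have h2 := congrArg (fun c => (2 : ℝ) • c) h
  simp only [smul_smul, smul_zero] at h2
  norm_num at h2
  exact h2

lemma aux_etab (hEta : ∀ (i : Fin p) (X Y : V), s.dEta i X Y = 0)
    (k i : Fin p) (X : V) :
    s.η k (s.b (s.ξ i) X) = s.act (s.ξ i) (s.η k X) := by
  have h := aux_deta s hEta k (s.ξ i) X
  have hc := aux_act_const s X k i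
  linear_combination -h - hc

end Aux

/-- on a weak almost para-C-manifold (`dΦ = 0`, `dη^i = 0`),
`[ξ_i, ξ_j] = 0` and `∇_{ξ_i} ξ_j = 0`; hence `ker f` defines a totally geodesic
foliation with sectional curvature `K(ξ_i, ξ_j) = 0`. -/
theorem paraC_xi_flat {C V : Type*} [CommRing C] [Algebra ℝ C] [AddCommGroup V]
    [Module ℝ V] [Module C V] [IsScalarTower ℝ C V] {p : ℕ} (s : MWPF C V p)
    (hPhi : ∀ X Y Z, s.dPhi X Y Z = 0)
    (hEta : ∀ (i : Fin p) (X Y : V), s.dEta i X Y = 0) :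
    (∀ i j : Fin p, s.b (s.ξ i) (s.ξ j) = 0) ∧
    (∀ i j : Fin p, s.nabla (s.ξ i) (s.ξ j) = 0) ∧
    (∀ i j : Fin p, s.g (s.Rm (s.ξ i) (s.ξ j) (s.ξ j)) (s.ξ i) = 0) := by
  have hact0 := aux_act_zero s
  have hconst := aux_act_const s
  have hgx := aux_gxi s
  have hgx' := aux_gxi' s
  have hetab := aux_etab s hEta
  -- [xi_i, xi_j] = 0
  have hb : ∀ i j : Fin p, s.b (s.ξ i) (s.ξ j) = 0 := by
    intro i j
    apply s.hrank
    · intro k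
      rw [hetab k i (s.ξ j), s.hetaxi]
      split_ifs
      · exact aux_act_one s _
      · exact hact0 _
    · intro Y
      have h := hPhi (s.ξ i) (s.ξ j) Y
      unfold MWPF.dPhi MWPF.Phi at h
      have h3 := congrArg (fun c => (3 : ℝ) • c) h
      simp only [smul_smul, smul_zero] at h3
      norm_num at h3
      rw [aux_fxi s i, aux_fxi s j, map_zero, map_zero, hgx' j (s.f Y)] at h3
      rw [aux_etaf s j Y] at h3
      simp only [map_zero, hact0] at h3
      linear_combination -h3
  -- nabla_{xi_i} xi_j = 0
  have hnab : ∀ i j : Fin p, s.nabla (s.ξ i) (s.ξ j) = 0 := by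
    intro i j
    apply s.hgnondeg
    intro Z
    have key : ∀ a c : Fin p,
        s.g (s.nabla (s.ξ a) (s.ξ c)) Z = - s.η c (s.nabla Z (s.ξ a)) := by
      intro a c
      have e1 := s.hmetric (s.ξ a) (s.ξ c) Z
      have ht := s.htors (s.ξ a) Z
      have hnz : s.nabla (s.ξ a) Z = s.nabla Z (s.ξ a) + s.b (s.ξ a) Z :=
        sub_eq_iff_eq_add'.mp ht
      rw [hnz, map_add, hgx' c Z, hgx' c (s.nabla Z (s.ξ a)),
        hgx' c (s.b (s.ξ a) Z), hetab c a Z] at e1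
      linear_combination -e1
    have e3 := s.hmetric Z (s.ξ i) (s.ξ j)
    rw [hgx' i (s.ξ j), hconst Z i j, hgx j (s.nabla Z (s.ξ i)),
      hgx' i (s.nabla Z (s.ξ j))] at e3
    have heq : s.nabla (s.ξ i) (s.ξ j) = s.nabla (s.ξ j) (s.ξ i) := by
      have ht2 := s.htors (s.ξ i) (s.ξ j)
      rw [hb i j] at ht2
      exact sub_eq_zero.mp ht2
    have k1 := key i j
    have k2 := key j i
    rw [← heq] at k2
    have h2 : (2 : ℝ) • s.g (s.nabla (s.ξ i) (s.ξ j)) Z = 0 := by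
      rw [two_smul]
      linear_combination k1 + k2 + e3
    calc s.g (s.nabla (s.ξ i) (s.ξ j)) Z
        = (2⁻¹ : ℝ) • ((2 : ℝ) • s.g (s.nabla (s.ξ i) (s.ξ j)) Z) := by
          rw [smul_smul]; norm_num
      _ = 0 := by rw [h2, smul_zero]
  refine ⟨hb, hnab, ?_⟩
  intro i j
  unfold MWPF.Rm
  rw [hnab j j, hnab i j, hb i j, aux_nabla_zero_right, aux_nabla_zero_right,
    aux_nabla_zero_left]
  simp
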